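/- For every real w > 0, ∫₀^∞ sin(wz)/sinh(πz) dz = (1/2)·tanh(w/2). -/

import Mathlib

open MeasureTheory Real

section Helpers
open Set

lemma integrableOn_exp_sin (c w : ℝ) (hc : 0 < c) :
    IntegrableOn (fun z : ℝ => Real.exp (-(c * z)) * Real.sin (w * z)) (Ioi 0) := by
  refine Integrable.mono' (exp_neg_integrableOn_Ioi 0 hc) ?_ ?_
  · exact (Continuous.mul (by continuity) (by continuity)).aestronglyMeasurable
  · filter_upwards with z
    rw [norm_mul, Real.norm_eq_abs, Real.norm_eq_abs, Real.abs_exp, neg_mul]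
    nlinarith [abs_sin_le_one (w * z), Real.exp_pos (-(c*z)), abs_nonneg (Real.sin (w*z)),
      Real.abs_exp (-(c*z))]

lemma integral_exp_sin (c w : ℝ) (hc : 0 < c) :
    ∫ z in Ioi (0:ℝ), Real.exp (-(c * z)) * Real.sin (w * z) = w / (c ^ 2 + w ^ 2) := by
  have hden : (0:ℝ) < c ^ 2 + w ^ 2 := by positivity
  set F : ℝ → ℝ := fun z =>
    -(Real.exp (-(c * z)) * (c * Real.sin (w * z) + w * Real.cos (w * z))) / (c ^ 2 + w ^ 2)
    with hF
  have hderiv : ∀ z ∈ Ioi (0:ℝ), HasDerivAt F (Real.exp (-(c * z)) * Real.sin (w * z)) z := by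
    intro z _
    have he : HasDerivAt (fun z : ℝ => Real.exp (-(c * z))) (-c * Real.exp (-(c * z))) z := by
      simpa [mul_comm] using (((hasDerivAt_id z).const_mul (-c)).exp)
    have hs : HasDerivAt (fun z : ℝ => Real.sin (w * z)) (w * Real.cos (w * z)) z := by
      simpa [mul_comm] using (((hasDerivAt_id z).const_mul w).sin)
    have hcos : HasDerivAt (fun z : ℝ => Real.cos (w * z)) (-(w * Real.sin (w * z))) z := by
      simpa [mul_comm, mul_assoc] using (((hasDerivAt_id z).const_mul w).cos)
    have := (((he.mul ((hs.const_mul c).add (hcos.const_mul w))).neg).div_const (c ^ 2 + w ^ 2))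
    convert this using 1
    · rfl
    · rfl
    · rfl
    · simp only [Pi.add_apply]
      rw [eq_div_iff hden.ne']
      ring
  have htend : Filter.Tendsto F Filter.atTop (nhds 0) := by
    apply squeeze_zero_norm (a := fun z => Real.exp (-(c * z)) * ((|c| + |w|) / (c ^ 2 + w ^ 2)))
    · intro z
      rw [hF]
      rw [norm_div, norm_neg, norm_mul, Real.norm_eq_abs, Real.norm_eq_abs, Real.norm_eq_abs,
        Real.abs_exp, abs_of_pos hden]
      rw [div_le_iff₀ hden, mul_assoc, div_mul_cancel₀ _ hden.ne']
      have : |c * Real.sin (w * z) + w * Real.cos (w * z)| ≤ |c| + |w| := by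
        calc |c * Real.sin (w * z) + w * Real.cos (w * z)|
            ≤ |c * Real.sin (w * z)| + |w * Real.cos (w * z)| := abs_add_le _ _
          _ ≤ |c| + |w| := by
              rw [abs_mul, abs_mul]
              have h1 := mul_le_of_le_one_right (abs_nonneg c) (abs_sin_le_one (w*z))
              have h2 := mul_le_of_le_one_right (abs_nonneg w) (abs_cos_le_one (w*z))
              linarith
      exact mul_le_mul_of_nonneg_left this (Real.exp_pos _).le
    · rw [show (0:ℝ) = 0 * ((|c| + |w|) / (c ^ 2 + w ^ 2)) by ring]
      apply Filter.Tendsto.mul_const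
      exact Real.tendsto_exp_atBot.comp (Filter.tendsto_atTop_atBot.mpr
        (fun b => ⟨-b / c + 1, fun a ha => by
          have h2 : c * (-b / c + 1) = -b + c := by field_simp
          nlinarith [mul_le_mul_of_nonneg_left ha hc.le]⟩))
  have := integral_Ioi_of_hasDerivAt_of_tendsto
    (f := F) (f' := fun z => Real.exp (-(c * z)) * Real.sin (w * z)) (a := 0) (m := 0)
    (by exact (Continuous.continuousWithinAt (by fun_prop))) hderiv
    (integrableOn_exp_sin c w hc) htend
  rw [this, hF]
  simp
  ring

lemma hasSum_inv_sinh (x : ℝ) (hx : 0 < x) :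
    HasSum (fun n : ℕ => 2 * Real.exp (-((2 * n + 1) * x))) (1 / Real.sinh x) := by
  have hr : |Real.exp (-(2 * x))| < 1 := by
    rw [abs_of_pos (Real.exp_pos _)]
    exact Real.exp_lt_one_iff.mpr (by linarith)
  have h := (hasSum_geometric_of_abs_lt_one hr).mul_left (2 * Real.exp (-x))
  have h2 : Real.exp x * Real.exp (-x) = 1 := by rw [← Real.exp_add]; simp
  have h3 : Real.exp (-x) * Real.exp (-x) = Real.exp (-(2 * x)) := by
    rw [← Real.exp_add]; ring_nf
  have key : 1 - Real.exp (-(2 * x)) = Real.sinh x * (2 * Real.exp (-x)) := by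
    rw [Real.sinh_eq]; linear_combination h3 - h2
  have hs : Real.sinh x ≠ 0 := ne_of_gt (by positivity)
  have hval : 2 * Real.exp (-x) * (1 - Real.exp (-(2 * x)))⁻¹ = 1 / Real.sinh x := by
    rw [key, mul_inv]
    field_simp
  have hfun : (fun n : ℕ => 2 * Real.exp (-((2 * n + 1) * x)))
      = (fun n : ℕ => 2 * Real.exp (-x) * Real.exp (-(2 * x)) ^ n) := by
    funext n
    rw [mul_assoc, ← Real.exp_nat_mul, ← Real.exp_add]
    ring_nf
  rw [hfun, ← hval]
  exact h

noncomputable section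

lemma complex_sinh_eq (z : ℂ) : Complex.sinh z = (Complex.exp z - Complex.exp (-z)) / 2 := rfl

-- coefficient denominators
lemma denomA_ne (a : ℝ) (ha : 0 < a) (n : ℤ) : ((a:ℂ) - Complex.I * n) ≠ 0 := by
  intro h
  have := congrArg Complex.re h
  simp at this
  exact ha.ne' this

lemma denomB_ne (a : ℝ) (ha : 0 < a) (n : ℤ) : ((a:ℂ) + Complex.I * n) ≠ 0 := by
  intro h
  have := congrArg Complex.re h
  simp at this
  exact ha.ne' this

lemma denomAB (a : ℝ) (n : ℤ) :
    ((a:ℂ) - Complex.I * n) * ((a:ℂ) + Complex.I * n) = ((a^2 + (n:ℝ)^2 : ℝ) : ℂ) := by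
  push_cast
  linear_combination (-(n:ℂ)^2) * Complex.I_sq

end


lemma fourier_coeff_calc (a : ℝ) (ha : 0 < a) (n : ℤ) :
    haveI : Fact (0 < 2*π) := ⟨by positivity⟩
    fourierCoeff (AddCircle.liftIco (2*π) 0
      (fun x : ℝ => Complex.exp (a*x - a*π) + Complex.exp (a*π - a*x))) n
    = ((2 * a * Real.sinh (a*π) / (π * (a^2 + (n:ℝ)^2)) : ℝ) : ℂ) := by
  haveI : Fact (0 < 2*π) := ⟨by positivity⟩
  have hπc : (π:ℂ) ≠ 0 := Complex.ofReal_ne_zero.mpr pi_ne_zero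
  have hA := denomA_ne a ha n
  have hB := denomB_ne a ha n
  have hB' : ((-(a:ℂ)) - Complex.I * n) ≠ 0 := fun h => hB (by linear_combination -h)
  set X : ℂ := Complex.exp ((a:ℂ) * π) with hXdef
  have hX : X ≠ 0 := Complex.exp_ne_zero _
  rw [fourierCoeff_liftIco_eq, fourierCoeffOn_eq_integral]
  simp only [zero_add, sub_zero]
  rw [intervalIntegral.integral_congr (g := fun x : ℝ =>
      Complex.exp (((a:ℂ) - Complex.I * n) * x) * X⁻¹
        + Complex.exp (((-(a:ℂ)) - Complex.I * n) * x) * X)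
    (fun x hx => by
      simp only [fourier_coe_apply, smul_eq_mul, mul_add, hXdef, ← Complex.exp_neg,
        ← Complex.exp_add]
      congr 1 <;> · congr 1; push_cast; field_simp; ring)]
  rw [intervalIntegral.integral_add
    ((Continuous.intervalIntegrable (by fun_prop :
      Continuous fun x : ℝ => Complex.exp (((a:ℂ) - Complex.I * n) * x) * X⁻¹)) _ _)
    ((Continuous.intervalIntegrable (by fun_prop :
      Continuous fun x : ℝ => Complex.exp (((-(a:ℂ)) - Complex.I * n) * x) * X)) _ _)]
  rw [intervalIntegral.integral_mul_const, intervalIntegral.integral_mul_const,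
    integral_exp_mul_complex hA, integral_exp_mul_complex hB']
  have e1 : Complex.exp (((a:ℂ) - Complex.I * n) * ((2*π:ℝ):ℂ)) = X ^ 2 := by
    rw [show ((a:ℂ) - Complex.I * n) * ((2*π:ℝ):ℂ)
        = ((-n : ℤ):ℂ) * (2*(π:ℂ)*Complex.I) + ((a:ℂ)*π + (a:ℂ)*π) by push_cast; ring]
    rw [Complex.exp_add, Complex.exp_int_mul_two_pi_mul_I, one_mul, Complex.exp_add, hXdef, sq]
  have e2 : Complex.exp ((((-(a:ℂ)) - Complex.I * n)) * ((2*π:ℝ):ℂ)) = (X ^ 2)⁻¹ := by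
    rw [show (((-(a:ℂ)) - Complex.I * n)) * ((2*π:ℝ):ℂ)
        = ((-n : ℤ):ℂ) * (2*(π:ℂ)*Complex.I) + (-(((a:ℂ)*π + (a:ℂ)*π))) by push_cast; ring]
    rw [Complex.exp_add, Complex.exp_int_mul_two_pi_mul_I, one_mul, Complex.exp_neg,
      Complex.exp_add, hXdef, sq]
  have e0 : ∀ c : ℂ, Complex.exp (c * ((0:ℝ):ℂ)) = 1 := fun c => by
    norm_num [Complex.exp_zero]
  rw [e1, e2, e0, e0, Complex.real_smul]
  have hABc : ((a:ℂ)^2 + (n:ℂ)^2) = ((a:ℂ) - Complex.I * n) * ((a:ℂ) + Complex.I * n) := by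
    rw [denomAB a n]; push_cast; ring
  have hS : (a:ℂ)^2 + (n:ℂ)^2 ≠ 0 := by rw [hABc]; exact mul_ne_zero hA hB
  push_cast
  rw [complex_sinh_eq, Complex.exp_neg, ← hXdef]
  rw [show (X^2 - 1)/((a:ℂ) - Complex.I*n) * X⁻¹ + ((X^2)⁻¹ - 1)/(-(a:ℂ) - Complex.I*n) * X
      = (X - X⁻¹) * (1/((a:ℂ) - Complex.I*n) + 1/((a:ℂ) + Complex.I*n)) by
    field_simp
    ring]
  rw [show 1/((a:ℂ) - Complex.I*n) + 1/((a:ℂ) + Complex.I*n)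
      = 2*(a:ℂ)/((a:ℂ)^2+(n:ℂ)^2) by
    rw [div_add_div _ _ hA hB, ← hABc]
    congr 1
    ring]
  field_simp [hS]

lemma complex_cosh_eq (z : ℂ) : Complex.cosh z = (Complex.exp z + Complex.exp (-z)) / 2 := rfl

lemma sumsq : Summable (fun k : ℕ => 1 / ((k : ℝ) + 1) ^ 2) := by
  have := summable_one_div_nat_pow (p := 2).mpr (by norm_num)
  exact_mod_cast (summable_nat_add_iff 1).mpr this

lemma neg_one_zpow_inv (m : ℤ) : ((-1:ℝ) ^ m)⁻¹ = (-1:ℝ) ^ m := by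
  rcases Int.even_or_odd m with h | h
  · rw [h.neg_one_zpow]; norm_num
  · rw [h.neg_one_zpow]; norm_num

lemma partB (w : ℝ) (hw : 0 < w) :
    HasSum (fun k : ℕ => 2 * (w / (((2 * k + 1) * π) ^ 2 + w ^ 2)))
      (1 / 2 * Real.tanh (w / 2)) := by
  haveI : Fact (0 < 2*π) := ⟨by positivity⟩
  set a : ℝ := w / π with hadef
  have ha : 0 < a := by positivity
  have hw' : a * π = w := by rw [hadef]; exact div_mul_cancel₀ w pi_ne_zero
  set d : ℤ → ℝ := fun n => 2 * a * Real.sinh (a*π) / (π * (a^2 + (n:ℝ)^2)) with hddef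
  set f₀ : ℝ → ℂ := fun x : ℝ => Complex.exp (a*x - a*π) + Complex.exp (a*π - a*x) with hf₀
  -- continuity
  have hcont : Continuous (AddCircle.liftIco (2*π) 0 f₀) := by
    apply AddCircle.liftIco_continuous
    · show f₀ 0 = f₀ (0 + 2*π)
      simp only [hf₀]
      rw [show (a:ℂ)*((0:ℝ):ℂ) - (a:ℂ)*(π:ℂ) = -((a:ℂ)*(π:ℂ)) by push_cast; ring,
        show (a:ℂ)*(π:ℂ) - (a:ℂ)*((0:ℝ):ℂ) = (a:ℂ)*(π:ℂ) by push_cast; ring,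
        show (a:ℂ)*(((0:ℝ)+2*π:ℝ):ℂ) - (a:ℂ)*(π:ℂ) = (a:ℂ)*(π:ℂ) by push_cast; ring,
        show (a:ℂ)*(π:ℂ) - (a:ℂ)*(((0:ℝ)+2*π:ℝ):ℂ) = -((a:ℂ)*(π:ℂ)) by push_cast; ring]
      ring
    · exact Continuous.continuousOn (by fun_prop)
  set F : C(AddCircle (2*π), ℂ) := ⟨AddCircle.liftIco (2*π) 0 f₀, hcont⟩ with hFdef
  have hcoeff : ∀ n : ℤ, fourierCoeff (⇑F) n = ((d n : ℝ) : ℂ) := fun n =>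
    fourier_coeff_calc a ha n
  -- summability
  have hdsum : Summable d := by
    have hnat : Summable (fun k : ℕ => 1 / (a^2 + (k:ℝ)^2)) := by
      apply Summable.of_nonneg_of_le (fun k => by positivity) (fun k => ?_)
        (sumsq.mul_left (1 + (1/a)^2))
      rw [mul_one_div, div_le_div_iff₀ (by positivity) (by positivity), one_mul]
      have h1' : a * (1/a) = 1 := by field_simp
      have hsq : a^2 * (1/a)^2 = 1 := by field_simp
      nlinarith [sq_nonneg (a - (1/a) * (k:ℝ)), hsq, h1']
    have hZ : Summable (fun n : ℤ => 1 / (a^2 + (n:ℝ)^2)) := by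
      apply Summable.of_nat_of_neg
      · exact hnat.congr (fun k => by norm_num)
      · exact hnat.congr (fun k => by push_cast; norm_num)
    apply (hZ.mul_left (2 * a * Real.sinh (a*π) / π)).congr
    intro n
    simp only [hddef]
    field_simp
  have hFsum : Summable (fourierCoeff (⇑F)) :=
    (Complex.summable_ofReal.mpr hdsum).congr (fun n => (hcoeff n).symm)
  -- evaluation at 0
  have h0mem : (0:ℝ) ∈ Ico (0:ℝ) (0 + 2*π) := ⟨le_refl _, by positivity⟩
  have hπmem : π ∈ Ico (0:ℝ) (0 + 2*π) := ⟨pi_pos.le, by nlinarith [pi_pos]⟩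
  have hF0 : F (((0:ℝ) : AddCircle (2*π))) = ((2 * Real.cosh (a*π) : ℝ) : ℂ) := by
    show AddCircle.liftIco (2*π) 0 f₀ _ = _
    rw [AddCircle.liftIco_coe_apply h0mem]
    simp only [hf₀]
    rw [show (a:ℂ)*((0:ℝ):ℂ) - (a:ℂ)*(π:ℂ) = -((a:ℂ)*(π:ℂ)) by push_cast; ring,
      show (a:ℂ)*(π:ℂ) - (a:ℂ)*((0:ℝ):ℂ) = (a:ℂ)*(π:ℂ) by push_cast; ring]
    push_cast [Complex.ofReal_cosh]
    rw [complex_cosh_eq]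
    ring
  have hFπ : F ((π : ℝ) : AddCircle (2*π)) = 2 := by
    show AddCircle.liftIco (2*π) 0 f₀ _ = _
    rw [AddCircle.liftIco_coe_apply hπmem]
    simp only [hf₀]
    rw [sub_self]
    rw [Complex.exp_zero]
    norm_num
  have hfour0 : ∀ n : ℤ, fourier n (((0:ℝ) : AddCircle (2*π))) = 1 := by
    intro n
    rw [fourier_coe_apply]
    norm_num
  have hfourπ : ∀ n : ℤ, fourier n (((π:ℝ) : AddCircle (2*π))) = (-1:ℂ) ^ n := by
    intro n
    rw [fourier_coe_apply]
    rw [show 2*(π:ℂ)*Complex.I*(n:ℂ)*(π:ℂ)/((2*π:ℝ):ℂ) = (n:ℂ)*((π:ℂ)*Complex.I) by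
      push_cast
      have : (π:ℂ) ≠ 0 := Complex.ofReal_ne_zero.mpr pi_ne_zero
      field_simp]
    rw [Complex.exp_int_mul, Complex.exp_pi_mul_I]
  -- the two pointwise sums
  have h2 : HasSum (fun n : ℤ => ((d n : ℝ):ℂ)) ((2 * Real.cosh (a*π) : ℝ) : ℂ) := by
    have := has_pointwise_sum_fourier_series_of_summable hFsum (((0:ℝ) : AddCircle (2*π)))
    rw [hF0] at this
    exact this.congr_fun (fun n => by rw [hcoeff n, hfour0 n, smul_eq_mul, mul_one])
  have h1 : HasSum (fun n : ℤ => ((d n : ℝ):ℂ) * (-1:ℂ)^n) 2 := by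
    have := has_pointwise_sum_fourier_series_of_summable hFsum (((π:ℝ) : AddCircle (2*π)))
    rw [hFπ] at this
    exact this.congr_fun (fun n => by rw [hcoeff n, hfourπ n, smul_eq_mul])
  -- subtract, transfer to ℝ
  set g : ℤ → ℝ := fun n => d n * (1 - (-1:ℝ)^n) with hgdef
  have hR : HasSum g (2 * Real.cosh (a*π) - 2) := by
    apply Complex.hasSum_ofReal.mp
    have h3 := h2.sub h1
    rw [show (((2 * Real.cosh (a*π) : ℝ)):ℂ) - 2 = ((2 * Real.cosh (a*π) - 2 : ℝ):ℂ) by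
      push_cast; ring] at h3
    exact h3.congr_fun (fun n => by rw [hgdef]; push_cast; ring)
  have h4 := hR.nat_add_neg
  have hg0 : g 0 = 0 := by rw [hgdef]; norm_num
  have hgneg : ∀ k : ℕ, g (-(k:ℤ)) = g (k:ℤ) := by
    intro k
    simp only [hgdef, hddef]
    rw [zpow_neg, neg_one_zpow_inv]
    push_cast
    norm_num [neg_sq]
  have h5 : HasSum (fun k : ℕ => 2 * g (k:ℤ)) (2 * Real.cosh (a*π) - 2) := by
    rw [hg0, add_zero] at h4
    exact h4.congr_fun (fun k => by rw [hgneg k]; ring)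
  -- restrict to odd indices
  have hinj : Function.Injective (fun k : ℕ => 2*k+1) := by
    intro x y h
    simp only at h
    omega
  have hvan : ∀ m ∉ Set.range (fun k : ℕ => 2*k+1), 2 * g (m:ℤ) = 0 := by
    intro m hm
    have hme : Even m := by
      rcases Nat.even_or_odd m with h | h
      · exact h
      · obtain ⟨j, hj⟩ := h
        exact absurd ⟨j, hj.symm⟩ hm
    have : Even (m:ℤ) := Int.even_coe_nat m |>.mpr hme
    simp only [hgdef]
    rw [this.neg_one_zpow]
    ring
  have h6 : HasSum (fun k : ℕ => 2 * g ((2*k+1 : ℕ):ℤ)) (2 * Real.cosh (a*π) - 2) :=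
    (Function.Injective.hasSum_iff hinj hvan).mpr h5
  -- final conversion
  have hsinh : (0:ℝ) < Real.sinh (a*π) := by positivity
  have h7 := h6.div_const (4 * Real.sinh (a*π))
  have hterm : ∀ k : ℕ, 2 * g ((2*k+1 : ℕ):ℤ) / (4 * Real.sinh (a*π))
      = 2 * (w / (((2 * k + 1) * π) ^ 2 + w ^ 2)) := by
    intro k
    have hodd : Odd (((2*k+1 : ℕ):ℤ)) := by
      refine ⟨k, by push_cast; ring⟩
    simp only [hgdef, hddef]
    rw [hodd.neg_one_zpow, ← hw']
    have hd2 : a^2 + (2*(k:ℝ)+1)^2 ≠ 0 := by positivity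
    have hd3 : ((2*(k:ℝ)+1)*π)^2 + (a*π)^2 ≠ 0 := by positivity
    push_cast
    field_simp
    ring
  have hsum' : (2 * Real.cosh (a*π) - 2) / (4 * Real.sinh (a*π)) = 1/2 * Real.tanh (w/2) := by
    rw [← hw']
    set u : ℝ := a*π/2 with hudef
    have hu : a*π = 2*u := by rw [hudef]; ring
    have hupos : 0 < u := by rw [hudef]; positivity
    rw [hu, Real.cosh_two_mul, Real.sinh_two_mul,
      Real.tanh_eq_sinh_div_cosh,
      show Real.cosh u^2 = 1 + Real.sinh u^2 from by linarith [Real.cosh_sq_sub_sinh_sq u]]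
    have hc : Real.cosh u ≠ 0 := (Real.cosh_pos u).ne'
    have hs : Real.sinh u ≠ 0 := ne_of_gt (by positivity)
    field_simp
    ring
  rw [funext hterm, hsum'] at h7
  exact h7

lemma cpos (n : ℕ) : (0:ℝ) < (2 * n + 1) * π := by positivity

lemma integral_z_exp (c : ℝ) (hc : 0 < c) :
    ∫ z in Ioi (0:ℝ), z * Real.exp (-(c * z)) = 1 / c ^ 2 := by
  have h := Real.integral_rpow_mul_exp_neg_mul_Ioi (a := 2) (r := c) (by norm_num) hc
  rw [Real.Gamma_two, mul_one] at h
  calc ∫ z in Ioi (0:ℝ), z * Real.exp (-(c * z))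
      = ∫ t in Ioi (0:ℝ), t ^ ((2:ℝ) - 1) * Real.exp (-(c * t)) := by
        refine setIntegral_congr_fun measurableSet_Ioi (fun z hz => ?_)
        norm_num
    _ = (1 / c) ^ (2:ℝ) := h
    _ = 1 / c ^ 2 := by
        rw [show ((2:ℝ)) = ((2:ℕ):ℝ) by norm_num, Real.rpow_natCast, div_pow, one_pow]

lemma integrableOn_z_exp (c : ℝ) (hc : 0 < c) :
    IntegrableOn (fun z : ℝ => z * Real.exp (-(c * z))) (Ioi 0) := by
  have := integrableOn_rpow_mul_exp_neg_mul_rpow (p := 1) (s := 1) (by norm_num) (by norm_num) hc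
  simpa [Real.rpow_one] using this

lemma partA (w : ℝ) (hw : 0 < w) :
    ∫ z in Ioi (0:ℝ), Real.sin (w * z) / Real.sinh (π * z)
      = ∑' n : ℕ, 2 * (w / (((2 * n + 1) * π) ^ 2 + w ^ 2)) := by
  set f : ℕ → ℝ → ℝ :=
    fun n z => 2 * (Real.exp (-((2 * n + 1) * π * z)) * Real.sin (w * z)) with hf
  have hmeas : ∀ n, AEStronglyMeasurable (f n) (volume.restrict (Ioi 0)) := fun n =>
    ((continuous_const.mul (((Real.continuous_exp.comp (by continuity)).mul
      (Real.continuous_sin.comp (by continuity))))).aestronglyMeasurable)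
  have hbound : ∀ n, (∫⁻ z in Ioi 0, ‖f n z‖₊)
      ≤ ENNReal.ofReal (2 * w * (1 / ((2 * n + 1) * π) ^ 2)) := by
    intro n
    have hint : ∫⁻ z in Ioi 0, ENNReal.ofReal (2 * w * (z * Real.exp (-((2 * n + 1) * π * z))))
        = ENNReal.ofReal (2 * w * (1 / ((2 * n + 1) * π) ^ 2)) := by
      rw [← ofReal_integral_eq_lintegral_ofReal
        (((integrableOn_z_exp _ (cpos n)).const_mul (2 * w)))
        ((ae_restrict_mem measurableSet_Ioi).mono fun z hz => by
          have hz' : (0:ℝ) < z := hz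
          positivity)]
      rw [integral_const_mul, integral_z_exp _ (cpos n)]
    rw [← hint]
    apply setLIntegral_mono_ae (by fun_prop)
    filter_upwards [] with z
    intro hz
    have hz' : (0:ℝ) < z := hz
    rw [← enorm_eq_nnnorm, ← ofReal_norm]
    apply ENNReal.ofReal_le_ofReal
    rw [hf]
    simp only [norm_mul, Real.norm_eq_abs]
    have h1 : |Real.sin (w * z)| ≤ w * z := by
      have := Real.abs_sin_le_abs (x := w * z)
      rwa [abs_of_pos (by positivity : (0:ℝ) < w * z)] at this
    have h2 : |Real.exp (-((2 * n + 1) * π * z))| = Real.exp (-((2 * n + 1) * π * z)) :=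
      abs_of_pos (Real.exp_pos _)
    rw [h2]
    calc |(2:ℝ)| * (Real.exp (-((2 * n + 1) * π * z)) * |Real.sin (w * z)|)
        ≤ |(2:ℝ)| * (Real.exp (-((2 * n + 1) * π * z)) * (w * z)) := by
          gcongr
      _ = 2 * w * (z * Real.exp (-((2 * n + 1) * π * z))) := by
          rw [abs_of_pos (by norm_num : (0:ℝ) < 2)]; ring
  have hsummable : Summable (fun n : ℕ => 2 * w * (1 / ((2 * n + 1) * π) ^ 2)) := by
    have h0 : Summable (fun n : ℕ => 1 / ((n : ℝ) + 1) ^ 2) := by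
      have := summable_one_div_nat_pow (p := 2).mpr (by norm_num)
      exact_mod_cast (summable_nat_add_iff 1).mpr this
    apply Summable.of_nonneg_of_le (fun n => by positivity)
      (fun n => ?_) (h0.mul_left (2 * w))
    have hle : ((n : ℝ) + 1) ^ 2 ≤ ((2 * n + 1) * π) ^ 2 := by
      have h1 : (n : ℝ) + 1 ≤ (2 * n + 1) * π := by
        nlinarith [Real.pi_gt_three, (Nat.cast_nonneg n : (0:ℝ) ≤ n)]
      nlinarith [(by positivity : (0:ℝ) ≤ (n:ℝ) + 1)]
    gcongr
  have hswap : ∫ z in Ioi (0:ℝ), ∑' n, f n z = ∑' n, ∫ z in Ioi (0:ℝ), f n z := by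
    apply integral_tsum hmeas
    apply ne_of_lt
    calc ∑' n, ∫⁻ z in Ioi 0, ‖f n z‖₊
        ≤ ∑' n : ℕ, ENNReal.ofReal (2 * w * (1 / ((2 * n + 1) * π) ^ 2)) :=
          ENNReal.tsum_le_tsum hbound
      _ = ENNReal.ofReal (∑' n : ℕ, 2 * w * (1 / ((2 * n + 1) * π) ^ 2)) :=
          (ENNReal.ofReal_tsum_of_nonneg (fun n => by positivity) hsummable).symm
      _ < ⊤ := ENNReal.ofReal_lt_top
  have hpt : EqOn (fun z => Real.sin (w * z) / Real.sinh (π * z))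
      (fun z => ∑' n, f n z) (Ioi (0:ℝ)) := by
    intro z hz
    have hz' : (0:ℝ) < z := hz
    have hsum := (hasSum_inv_sinh (π * z) (by positivity)).mul_right (Real.sin (w * z))
    have hfun : (fun n : ℕ => 2 * Real.exp (-((2 * n + 1) * (π * z))) * Real.sin (w * z))
        = fun n => f n z := by
      funext n
      rw [hf, ← mul_assoc (2 * (n:ℝ) + 1) π z]
      ring
    rw [hfun] at hsum
    simp only
    rw [hsum.tsum_eq, one_div, inv_mul_eq_div]
  rw [setIntegral_congr_fun measurableSet_Ioi hpt, hswap]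
  apply tsum_congr
  intro n
  rw [hf]
  simp only
  rw [integral_const_mul, integral_exp_sin ((2 * n + 1) * π) w (cpos n)]

end Helpers

theorem integral_sin_div_sinh (w : ℝ) (hw : 0 < w) :
    ∫ z in Set.Ioi (0 : ℝ), Real.sin (w * z) / Real.sinh (π * z)
      = (1 / 2) * Real.tanh (w / 2) := by
  rw [partA w hw, ← (partB w hw).tsum_eq]
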